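/- Let E be a vector lattice over ℝ, let Y be a real vector space, let n be a positive integer, and let T : E^n → Y be an n-linear map whose restriction to (E⁺)^n is total orderization invariant. Then T(f_1,...,f_n) = 0 whenever f_1,...,f_n ∈ E⁺ and f_i ⊓ f_j = 0 for some i,j ∈ {1,...,n} with i ≠ j. -/

import Mathlib

open Finset

/-- `Mk x k` is `M_{k+1}(x_1,...,x_n)` (`k : Fin n` represents the 1-indexed index `k+1`):
the supremum over all subsets `I` of `{1,...,n}` of cardinality `n + 1 - (k+1) = n - k` of
the infima `⋀_{i ∈ I} x i`. -/
def Mk {L : Type*} [Lattice L] {n : ℕ} (x : Fin n → L) (k : Fin n) : L :=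
  ((univ : Finset (Fin n)).powersetCard (n - k.val)).attach.sup'
    (attach_nonempty_iff.mpr (powersetCard_nonempty.mpr (by simp)))
    fun I => I.1.inf' (card_pos.mp (by
      have h := (mem_powersetCard.mp I.2).2
      have hk := k.isLt
      omega)) x

lemma le_Mk {L : Type*} [Lattice L] {n : ℕ} (x : Fin n → L) (k : Fin n)
    {I : Finset (Fin n)} (hI : I ∈ (univ : Finset (Fin n)).powersetCard (n - k.val))
    (hne : I.Nonempty) : I.inf' hne x ≤ Mk x k := by
  exact Finset.le_sup' (f := fun I : {I // I ∈ (univ : Finset (Fin n)).powersetCard (n - k.val)}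
    => I.1.inf' (card_pos.mp (by
      have h := (mem_powersetCard.mp I.2).2
      have hk := k.isLt
      omega)) x) (mem_attach _ ⟨I, hI⟩)

lemma Mk_le {L : Type*} [Lattice L] {n : ℕ} (x : Fin n → L) (k : Fin n) {y : L}
    (h : ∀ I (hI : I ∈ (univ : Finset (Fin n)).powersetCard (n - k.val)) (hne : I.Nonempty),
      I.inf' hne x ≤ y) : Mk x k ≤ y := by
  apply Finset.sup'_le
  rintro ⟨I, hI⟩ -
  exact h I hI _

lemma inf'_congr_set {α β : Type*} [SemilatticeInf α] {s t : Finset β} (h : s = t)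
    {hs : s.Nonempty} {ht : t.Nonempty} (f : β → α) : s.inf' hs f = t.inf' ht f := by
  subst h; rfl

lemma riesz_aux {E : Type*} [Lattice E] [AddCommGroup E]
    [CovariantClass E E (· + ·) (· ≤ ·)]
    {d u v : E} (hd : 0 ≤ d) (hu : 0 ≤ u) (hv : 0 ≤ v) :
    d ⊓ (u + v) ≤ d ⊓ u + d ⊓ v := by
  rw [← sub_le_iff_le_add', sub_eq_add_neg, neg_inf, add_sup]
  apply sup_le
  · calc d ⊓ (u + v) + -d ≤ d + -d := by
          exact add_le_add_left inf_le_left _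
      _ = 0 := by abel
      _ ≤ d ⊓ v := le_inf hd hv
  · apply le_inf
    · calc d ⊓ (u + v) + -u ≤ d + -u := add_le_add_left inf_le_left _
        _ ≤ d + 0 := by
            apply add_le_add_right
            simpa using hu
        _ = d := by abel
    · calc d ⊓ (u + v) + -u ≤ (u + v) + -u := add_le_add_left inf_le_right _
        _ = v := by abel

/-- If `T : E^n → Y` is an `n`-linear map on a vector lattice `E` whose restriction to
`(E⁺)^n` is total orderization invariant, then `T(f_1,...,f_n) = 0` whenever
`f_1,...,f_n ∈ E⁺` and `f_i ⊓ f_j = 0` for some `i ≠ j`. -/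
theorem statement12 {E Y : Type*} [Lattice E] [AddCommGroup E] [Module ℝ E]
    [CovariantClass E E (· + ·) (· ≤ ·)] [PosSMulMono ℝ E]
    [AddCommGroup Y] [Module ℝ Y] {n : ℕ} (hn : 0 < n)
    (T : MultilinearMap ℝ (fun _ : Fin n => E) Y)
    (hT : ∀ x : Fin n → E, (∀ i, 0 ≤ x i) → T x = T (fun k => Mk x k))
    (f : Fin n → E) (hf : ∀ i, 0 ≤ f i)
    (hd : ∃ i j, i ≠ j ∧ f i ⊓ f j = 0) :
    T f = 0 := by
  obtain ⟨i, j, hij, huv⟩ := hd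
  set u := f i with hu
  set v := f j with hv
  set g : Fin n → E := Function.update (Function.update f i (u + v)) j 0 with hgdef
  have hgj : g j = 0 := by simp [hgdef]
  have hgi : g i = u + v := by
    simp [hgdef, Function.update_of_ne hij]
  have hgt : ∀ t, t ≠ i → t ≠ j → g t = f t := fun t hti htj => by
    simp [hgdef, Function.update_of_ne htj, Function.update_of_ne hti]
  have hg : ∀ t, 0 ≤ g t := by
    intro t
    by_cases htj : t = j
    · subst htj; rw [hgj]
    · by_cases hti : t = i
      · rw [hti, hgi]; exact add_nonneg (hf i) (hf j)
      · rw [hgt t hti htj]; exact hf t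
  -- cardinality facts
  have hcard : ∀ k : Fin n, 0 < n - k.val := fun k => by have := k.isLt; omega
  have hmem : ∀ (k : Fin n) (I : Finset (Fin n)), I.card = n - k.val →
      I ∈ (univ : Finset (Fin n)).powersetCard (n - k.val) := fun k I h =>
    mem_powersetCard_univ.mpr h
  have hne_of : ∀ (k : Fin n) (I : Finset (Fin n)),
      I ∈ (univ : Finset (Fin n)).powersetCard (n - k.val) → I.Nonempty := by
    intro k I hI
    have := (mem_powersetCard_univ.mp hI)
    exact card_pos.mp (by rw [this]; exact hcard k)
  -- nonnegativity of Mk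
  have hMk_nonneg : ∀ (x : Fin n → E), (∀ t, 0 ≤ x t) → ∀ k : Fin n, 0 ≤ Mk x k := by
    intro x hx k
    obtain ⟨I, hI⟩ := powersetCard_nonempty.mpr
      (show n - k.val ≤ (univ : Finset (Fin n)).card by simp)
    have hne := hne_of k I hI
    calc (0 : E) ≤ I.inf' hne x := le_inf' _ _ fun t _ => hx t
      _ ≤ Mk x k := le_Mk x k hI hne
  -- key: Mk f = Mk g
  have key : ∀ k : Fin n, Mk f k = Mk g k := by
    intro k
    apply le_antisymm
    · apply Mk_le
      intro I hI hne
      by_cases hjI : j ∈ I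
      · by_cases hiI : i ∈ I
        · calc I.inf' hne f ≤ f i ⊓ f j := le_inf (inf'_le _ hiI) (inf'_le _ hjI)
            _ = 0 := huv
            _ ≤ Mk g k := hMk_nonneg g hg k
        · -- replace j by i
          set I' := insert i (I.erase j) with hI'def
          have hinotmem : i ∉ I.erase j := fun h => hiI (mem_of_mem_erase h)
          have hcardI' : I'.card = n - k.val := by
            rw [hI'def, card_insert_of_notMem hinotmem, card_erase_of_mem hjI,
              mem_powersetCard_univ.mp hI]
            have := hcard k
            omega
          have hneI' : I'.Nonempty := insert_nonempty _ _
          calc I.inf' hne f ≤ I'.inf' hneI' g := by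
                apply le_inf'
                intro t htI'
                rcases mem_insert.mp htI' with h | h
                · rw [h, hgi]
                  calc I.inf' hne f ≤ f j := inf'_le _ hjI
                    _ ≤ u + v := le_add_of_nonneg_left (hf i)
                · have htj := ne_of_mem_erase h
                  have hti : t ≠ i := fun hti => hiI (hti ▸ mem_of_mem_erase h)
                  rw [hgt t hti htj]
                  exact inf'_le _ (mem_of_mem_erase h)
            _ ≤ Mk g k := le_Mk g k (hmem k I' hcardI') hneI'
      · -- j ∉ I : f ≤ g on I
        calc I.inf' hne f ≤ I.inf' hne g := by
              apply le_inf'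
              intro t htI
              have htj : t ≠ j := fun h => hjI (h ▸ htI)
              by_cases hti : t = i
              · subst hti
                rw [hgi]
                calc I.inf' hne f ≤ f t := inf'_le _ htI
                  _ ≤ u + v := le_add_of_nonneg_right (hf j)
              · rw [hgt t hti htj]
                exact inf'_le _ htI
          _ ≤ Mk g k := le_Mk g k hI hne
    · apply Mk_le
      intro I hI hne
      by_cases hjI : j ∈ I
      · calc I.inf' hne g ≤ g j := inf'_le _ hjI
          _ = 0 := hgj
          _ ≤ Mk f k := hMk_nonneg f hf k
      · by_cases hiI : i ∈ I
        · -- the interesting case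
          by_cases herase : (I.erase i).Nonempty
          · set d := (I.erase i).inf' herase f with hd
            have hd0 : 0 ≤ d := le_inf' _ _ fun t _ => hf t
            have hIdecomp : I = insert i (I.erase i) := (insert_erase hiI).symm
            have hinfg : I.inf' hne g = (u + v) ⊓ d := by
              rw [inf'_congr_set hIdecomp (ht := insert_nonempty _ _) g,
                inf'_insert (H := herase), hgi]
              congr 1
              apply inf'_congr _ rfl
              intro t ht
              exact hgt t (ne_of_mem_erase ht) (fun h => hjI (h ▸ mem_of_mem_erase ht))
            have hinff : I.inf' hne f = u ⊓ d := by
              rw [inf'_congr_set hIdecomp (ht := insert_nonempty _ _) f,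
                inf'_insert (H := herase)]
            -- the other set
            set I' := insert j (I.erase i) with hI'def
            have hjnotmem : j ∉ I.erase i := fun h => hjI (mem_of_mem_erase h)
            have hcardI' : I'.card = n - k.val := by
              rw [hI'def, card_insert_of_notMem hjnotmem, card_erase_of_mem hiI,
                mem_powersetCard_univ.mp hI]
              have := hcard k
              have := card_pos.mpr ⟨i, hiI⟩
              rw [mem_powersetCard_univ.mp hI] at this
              omega
            have hinff' : I'.inf' (insert_nonempty _ _) f = v ⊓ d := by
              rw [inf'_congr_set hI'def (ht := insert_nonempty _ _) f,
                inf'_insert (H := herase)]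
            have hdisj : (u ⊓ d) ⊓ (v ⊓ d) = 0 := by
              apply le_antisymm
              · calc (u ⊓ d) ⊓ (v ⊓ d) ≤ u ⊓ v :=
                    inf_le_inf inf_le_left inf_le_left
                  _ = 0 := huv
              · exact le_inf (le_inf (hf i) hd0) (le_inf (hf j) hd0)
            calc I.inf' hne g = d ⊓ (u + v) := by rw [hinfg, inf_comm]
              _ ≤ d ⊓ u + d ⊓ v := riesz_aux hd0 (hf i) (hf j)
              _ = (d ⊓ u) ⊔ (d ⊓ v) := by
                  rw [← inf_add_sup (d ⊓ u) (d ⊓ v)]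
                  rw [show d ⊓ u ⊓ (d ⊓ v) = (u ⊓ d) ⊓ (v ⊓ d) by
                    rw [inf_comm d u, inf_comm d v], hdisj, zero_add]
              _ ≤ Mk f k := by
                  apply sup_le
                  · rw [inf_comm, ← hinff]
                    exact le_Mk f k hI hne
                  · rw [inf_comm, ← hinff']
                    exact le_Mk f k (hmem k I' hcardI') _
          · -- I = {i}
            have hIsingle : I = {i} := by
              apply eq_singleton_iff_unique_mem.mpr
              refine ⟨hiI, fun t ht => ?_⟩
              by_contra hti
              exact herase ⟨t, mem_erase.mpr ⟨hti, ht⟩⟩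
            have hm1 : n - k.val = 1 := by
              rw [← mem_powersetCard_univ.mp hI, hIsingle, card_singleton]
            have hinfg : I.inf' hne g = u + v := by
              subst hIsingle; rw [inf'_singleton, hgi]
            have hsum : u + v = u ⊔ v := by
              rw [← inf_add_sup u v, huv, zero_add]
            rw [hinfg, hsum]
            apply sup_le
            · have : ({i} : Finset (Fin n)).inf' (singleton_nonempty _) f ≤ Mk f k :=
                le_Mk f k (hmem k {i} (by simp [hm1])) _
              simpa using this
            · have : ({j} : Finset (Fin n)).inf' (singleton_nonempty _) f ≤ Mk f k :=
                le_Mk f k (hmem k {j} (by simp [hm1])) _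
              simpa using this
        · -- i, j ∉ I : g = f on I
          calc I.inf' hne g = I.inf' hne f := by
                apply inf'_congr _ rfl
                intro t ht
                exact hgt t (fun h => hiI (h ▸ ht)) (fun h => hjI (h ▸ ht))
            _ ≤ Mk f k := le_Mk f k hI hne
  calc T f = T (fun k => Mk f k) := hT f hf
    _ = T (fun k => Mk g k) := by simp_rw [key]
    _ = T g := (hT g hg).symm
    _ = 0 := T.map_coord_zero j hgj
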